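/- Fix r > 0 and a positive integer m. Define the random variable l = Σ_{n=1}^{m} z_n where z_1, ..., z_m are independent Bernoulli random variables with z_n ~ Bernoulli(r/(n−1+r)). Then P(l = j) = Γ(r)/Γ(m+r) · |s(m, j)| · r^j for j = 0, 1, ..., m, where |s(m, j)| are the unsigned Stirling numbers of the first kind. (This is the Chinese restaurant table distribution CRT(m, r).) -/

import Mathlib

/-- Unsigned Stirling numbers of the first kind:
`|s(n+1,k)| = n·|s(n,k)| + |s(n,k-1)|`, `|s(0,0)| = 1`. -/
def stir : ℕ → ℕ → ℕ
  | 0, 0 => 1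
  | 0, _ + 1 => 0
  | n + 1, 0 => n * stir n 0
  | n + 1, j + 1 => n * stir n (j + 1) + stir n j

/-- pmf of `l = Σ_{n=1}^{m} z_n` with independent `z_n ~ Bernoulli(r/(n-1+r))`
(the Chinese restaurant table distribution `CRT(m, r)`), defined by convolution. -/
noncomputable def crtD (r : ℝ) : ℕ → ℕ → ℝ
  | 0, j => if j = 0 then 1 else 0
  | m + 1, 0 => (1 - r / ((m : ℝ) + r)) * crtD r m 0
  | m + 1, j + 1 => (1 - r / ((m : ℝ) + r)) * crtD r m (j + 1) + r / ((m : ℝ) + r) * crtD r m j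

lemma crt_key (r : ℝ) (hr : 0 < r) (m j : ℕ) :
    crtD r m j = (stir m j : ℝ) * r ^ j / ∏ n ∈ Finset.range m, ((n : ℝ) + r) := by
  induction m generalizing j with
  | zero =>
    cases j with
    | zero => simp [crtD, stir]
    | succ j => simp [crtD, stir]
  | succ m ih =>
    have hmr : (0:ℝ) < (m : ℝ) + r := by positivity
    have hPm : (0:ℝ) < ∏ n ∈ Finset.range m, ((n : ℝ) + r) := by
      apply Finset.prod_pos; intro i _; positivity
    have hsub : 1 - r / ((m : ℝ) + r) = (m : ℝ) / ((m : ℝ) + r) := by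
      field_simp
      ring
    rw [Finset.prod_range_succ]
    cases j with
    | zero =>
      show (1 - r / ((m : ℝ) + r)) * crtD r m 0 = _
      rw [ih, hsub, show stir (m+1) 0 = m * stir m 0 from rfl]
      push_cast
      field_simp
    | succ j =>
      show (1 - r / ((m : ℝ) + r)) * crtD r m (j+1) + r / ((m : ℝ) + r) * crtD r m j = _
      rw [ih, ih, hsub, show stir (m+1) (j+1) = m * stir m (j+1) + stir m j from rfl]
      push_cast
      field_simp
      ring

lemma gamma_prod (r : ℝ) (hr : 0 < r) (m : ℕ) :
    Real.Gamma ((m : ℝ) + r) = (∏ n ∈ Finset.range m, ((n : ℝ) + r)) * Real.Gamma r := by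
  induction m with
  | zero => simp
  | succ m ih =>
    have hmr : ((m : ℝ) + r) ≠ 0 := by positivity
    have : ((m : ℕ) + 1 : ℕ) + r = ((m : ℝ) + r) + 1 := by push_cast; ring
    rw [this, Real.Gamma_add_one hmr, ih, Finset.prod_range_succ]
    ring

/-- For `r > 0` and a positive integer `m`, the sum `l` of independent
`Bernoulli(r/(n-1+r))`, `n = 1..m`, satisfies
`P(l = j) = Γ(r)/Γ(m+r) · |s(m,j)| · r^j` for `0 ≤ j ≤ m`. -/
theorem crt_pmf (m : ℕ) (hm : 0 < m) (r : ℝ) (hr : 0 < r) (j : ℕ) (hj : j ≤ m) :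
    crtD r m j = Real.Gamma r / Real.Gamma (m + r) * (stir m j : ℝ) * r ^ j := by
  have hP : (0:ℝ) < ∏ n ∈ Finset.range m, ((n : ℝ) + r) := by
    apply Finset.prod_pos; intro i _; positivity
  have hG : Real.Gamma r ≠ 0 := (Real.Gamma_pos_of_pos hr).ne'
  rw [crt_key r hr m j, gamma_prod r hr m]
  field_simp
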